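/- For every natural number n, -4·∑_{k=0}^{2n} (-2)^k · binom(2n,k) / (k+1)^2 - 2·∑_{k=0}^{2n} (-2)^k · binom(2n,k) · H_k / (k+1) = 2·(H_{n+1} - 2·H_{2n+2})/(2n+1). -/

import Mathlib

open Finset

noncomputable def H (n : ℕ) : ℝ := ∑ i ∈ Finset.range n, 1 / ((i : ℝ) + 1)

namespace Stmt8Aux

lemma cast_choose (M k : ℕ) :
    (((M + 1).choose (k + 1) : ℝ)) = ((M : ℝ) + 1) * (M.choose k : ℝ) / ((k : ℝ) + 1) := by
  have h : ((M + 1) * M.choose k : ℕ) = ((M + 1).choose (k + 1) * (k + 1) : ℕ) :=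
    Nat.add_one_mul_choose_eq M k
  have h' : ((M : ℝ) + 1) * (M.choose k : ℝ) = ((M + 1).choose (k + 1) : ℝ) * ((k : ℝ) + 1) := by
    exact_mod_cast h
  rw [eq_div_iff (by positivity : ((k : ℝ) + 1) ≠ 0)]
  linarith [h']

lemma binom_sum (M : ℕ) :
    ∑ j ∈ range (M + 1), (-2 : ℝ) ^ j * (M.choose j : ℝ) = (-1) ^ M := by
  have h := add_pow (-2 : ℝ) 1 M
  simp only [one_pow, mul_one] at h
  rw [show ((-2 : ℝ) + 1) = -1 by ring] at h
  rw [← h]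

/-- shifted binomial sum -/
lemma binom_shift (M : ℕ) :
    ∑ k ∈ range (M + 1), (-2 : ℝ) ^ k * ((M + 1).choose (k + 1) : ℝ)
      = ((-1 : ℝ) ^ (M + 1) - 1) / (-2) := by
  have h := binom_sum (M + 1)
  rw [sum_range_succ' (fun j => (-2 : ℝ) ^ j * ((M + 1).choose j : ℝ)) (M + 1)] at h
  simp only [pow_zero, Nat.choose_zero_right, Nat.cast_one, one_mul] at h
  have h2 : ∑ k ∈ range (M + 1), (-2 : ℝ) ^ (k + 1) * ((M + 1).choose (k + 1) : ℝ)
      = (-2) * ∑ k ∈ range (M + 1), (-2 : ℝ) ^ k * ((M + 1).choose (k + 1) : ℝ) := by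
    rw [mul_sum]; apply sum_congr rfl; intro k _; ring
  rw [h2] at h
  field_simp
  linarith [h]

/-- T(M) = ∑ (-2)^k C(M,k)/(k+1) -/
lemma Tsum_eq (M : ℕ) :
    ∑ k ∈ range (M + 1), (-2 : ℝ) ^ k * (M.choose k : ℝ) / ((k : ℝ) + 1)
      = (1 - (-1 : ℝ) ^ (M + 1)) / (2 * ((M : ℝ) + 1)) := by
  have key : ∀ k, (-2 : ℝ) ^ k * (M.choose k : ℝ) / ((k : ℝ) + 1)
      = ((-2 : ℝ) ^ k * ((M + 1).choose (k + 1) : ℝ)) / ((M : ℝ) + 1) := by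
    intro k
    rw [cast_choose]
    have hk : ((k : ℝ) + 1) ≠ 0 := by positivity
    have hM : ((M : ℝ) + 1) ≠ 0 := by positivity
    field_simp
  rw [sum_congr rfl (fun k _ => key k), ← sum_div, binom_shift]
  have hM : ((M : ℝ) + 1) ≠ 0 := by positivity
  field_simp
  ring

noncomputable def Uf (M : ℕ) : ℝ :=
  ∑ k ∈ range M, (-2 : ℝ) ^ k * (M.choose (k + 1) : ℝ) / ((k : ℝ) + 1)

noncomputable def W (m : ℕ) : ℝ :=
  ∑ k ∈ range (m + 1), (-2 : ℝ) ^ k * (m.choose k : ℝ) * H k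

noncomputable def Vf (M : ℕ) : ℝ :=
  ∑ k ∈ range M, (-2 : ℝ) ^ k * (M.choose (k + 1) : ℝ) * H k

lemma Uf_succ (M : ℕ) : Uf (M + 1) = Uf M + (1 - (-1 : ℝ) ^ (M + 1)) / (2 * ((M : ℝ) + 1)) := by
  rw [← Tsum_eq]
  unfold Uf
  have : ∀ k ∈ range (M + 1), (-2 : ℝ) ^ k * ((M + 1).choose (k + 1) : ℝ) / ((k : ℝ) + 1)
      = (-2 : ℝ) ^ k * (M.choose (k + 1) : ℝ) / ((k : ℝ) + 1)
        + (-2 : ℝ) ^ k * (M.choose k : ℝ) / ((k : ℝ) + 1) := by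
    intro k _
    rw [Nat.choose_succ_succ]
    push_cast
    ring
  rw [sum_congr rfl this, sum_add_distrib]
  congr 1
  rw [sum_range_succ]
  simp [Nat.choose_succ_self]

lemma W_succ (m : ℕ) :
    W (m + 1) = -W m - 2 * ((1 - (-1 : ℝ) ^ (m + 1)) / (2 * ((m : ℝ) + 1))) := by
  rw [← Tsum_eq]
  unfold W
  rw [sum_range_succ' (fun k => (-2 : ℝ) ^ k * ((m + 1).choose k : ℝ) * H k) (m + 1)]
  have h0 : (-2 : ℝ) ^ 0 * (((m + 1).choose 0 : ℕ) : ℝ) * H 0 = 0 := by simp [H]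
  rw [h0, add_zero]
  have hH : ∀ k : ℕ, H (k + 1) = H k + 1 / ((k : ℝ) + 1) := by
    intro k; unfold H; rw [sum_range_succ]
  have key : ∀ k ∈ range (m + 1),
      (fun k => (-2 : ℝ) ^ k * ((m + 1).choose k : ℝ) * H k) (k + 1)
      = ((-2) * ((-2 : ℝ) ^ k * (m.choose k : ℝ) * H k)
          + (-2) * ((-2 : ℝ) ^ k * (m.choose k : ℝ) / ((k : ℝ) + 1)))
        + (fun j => (-2 : ℝ) ^ j * (m.choose j : ℝ) * H j) (k + 1) := by
    intro k _
    simp only []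
    rw [Nat.choose_succ_succ, hH k]
    push_cast
    ring
  rw [sum_congr rfl key, sum_add_distrib, sum_add_distrib]
  have hB : ∑ k ∈ range (m + 1), (fun j => (-2 : ℝ) ^ j * (m.choose j : ℝ) * H j) (k + 1)
      = ∑ k ∈ range (m + 1), (-2 : ℝ) ^ k * (m.choose k : ℝ) * H k := by
    have e := sum_range_succ' (fun j => (-2 : ℝ) ^ j * (m.choose j : ℝ) * H j) (m + 1)
    rw [sum_range_succ] at e
    have hH0 : H 0 = 0 := by simp [H]
    simp only [Nat.choose_succ_self, Nat.cast_zero, mul_zero, zero_mul, add_zero, hH0] at e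
    exact e.symm
  rw [hB, ← mul_sum, ← mul_sum]
  ring

lemma Vf_succ (M : ℕ) : Vf (M + 1) = Vf M + W M := by
  unfold Vf W
  have : ∀ k ∈ range (M + 1), (-2 : ℝ) ^ k * ((M + 1).choose (k + 1) : ℝ) * H k
      = (-2 : ℝ) ^ k * (M.choose (k + 1) : ℝ) * H k
        + (-2 : ℝ) ^ k * (M.choose k : ℝ) * H k := by
    intro k _
    rw [Nat.choose_succ_succ]
    push_cast
    ring
  rw [sum_congr rfl this, sum_add_distrib]
  rw [sum_range_succ (fun k => (-2 : ℝ) ^ k * (M.choose (k + 1) : ℝ) * H k) M]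
  simp [Nat.choose_succ_self]

lemma W_zero : W 0 = 0 := by
  simp [W, H]

lemma neg_one_pow_even (j : ℕ) : (-1 : ℝ) ^ (2 * j) = 1 := by
  rw [pow_mul]; norm_num

lemma Vf_odd (n : ℕ) : Vf (2 * n + 1) = 0 := by
  induction n with
  | zero =>
    simp only [Nat.mul_zero, Nat.zero_add]
    rw [show (1 : ℕ) = 0 + 1 from rfl, Vf_succ, W_zero]
    simp [Vf]
  | succ n ih =>
    have h1 : 2 * (n + 1) + 1 = (2 * n + 2) + 1 := by ring
    rw [h1, Vf_succ, show 2 * n + 2 = (2 * n + 1) + 1 from rfl, Vf_succ, ih,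
      W_succ (2 * n + 1)]
    have he : (-1 : ℝ) ^ (2 * n + 1 + 1) = 1 := by
      rw [show 2 * n + 1 + 1 = 2 * (n + 1) by ring, neg_one_pow_even]
    rw [he]
    ring

lemma Uf_zero : Uf 0 = 0 := by simp [Uf]

lemma Uf_odd (n : ℕ) :
    Uf (2 * n + 1) = ∑ j ∈ range (n + 1), 1 / (2 * (j : ℝ) + 1) := by
  induction n with
  | zero =>
    simp only [Nat.mul_zero, Nat.zero_add]
    rw [show Uf 1 = Uf (0 + 1) from rfl, Uf_succ, Uf_zero]
    norm_num
  | succ n ih =>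
    have h1 : 2 * (n + 1) + 1 = ((2 * n + 1) + 1) + 1 := by ring
    rw [h1, Uf_succ, Uf_succ, ih,
      sum_range_succ (fun j => 1 / (2 * (j : ℝ) + 1)) (n + 1)]
    have he1 : (-1 : ℝ) ^ (2 * n + 1 + 1) = 1 := by
      rw [show 2 * n + 1 + 1 = 2 * (n + 1) by ring, neg_one_pow_even]
    have he2 : (-1 : ℝ) ^ (2 * n + 1 + 1 + 1) = -1 := by
      rw [show 2 * n + 1 + 1 + 1 = 2 * (n + 1) + 1 by ring, pow_succ, neg_one_pow_even]
      norm_num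
    rw [he1, he2]
    push_cast
    have h3 : 2 * (n : ℝ) + 1 + 1 + 1 ≠ 0 := by positivity
    have h4 : 2 * (n : ℝ) + 2 + 1 ≠ 0 := by positivity
    field_simp
    ring

lemma Hsum (n : ℕ) :
    ∑ j ∈ range (n + 1), 1 / (2 * (j : ℝ) + 1) = H (2 * n + 2) - H (n + 1) / 2 := by
  induction n with
  | zero =>
    norm_num [H, Finset.sum_range_succ]
  | succ n ih =>
    rw [sum_range_succ, ih]
    have e1 : 2 * (n + 1) + 2 = ((2 * n + 2) + 1) + 1 := by ring
    have e2 : H (((2 * n + 2) + 1) + 1)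
        = H (2 * n + 2) + 1 / (2 * (n : ℝ) + 2 + 1) + 1 / (2 * (n : ℝ) + 3 + 1) := by
      unfold H
      rw [sum_range_succ, sum_range_succ]
      push_cast
      ring
    have e3 : H ((n + 1) + 1) = H (n + 1) + 1 / ((n : ℝ) + 1 + 1) := by
      unfold H
      rw [sum_range_succ]
      push_cast
      ring
    rw [e1, e2, e3]
    push_cast
    have h1 : 2 * (n : ℝ) + 2 + 1 ≠ 0 := by positivity
    have h2 : 2 * (n : ℝ) + 3 + 1 ≠ 0 := by positivity
    have h3 : (n : ℝ) + 1 + 1 ≠ 0 := by positivity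
    field_simp
    ring

lemma Asum (n : ℕ) :
    ∑ k ∈ range (2 * n + 1), (-2 : ℝ) ^ k * ((2 * n).choose k : ℝ) / ((k : ℝ) + 1) ^ 2
      = Uf (2 * n + 1) / (2 * (n : ℝ) + 1) := by
  unfold Uf
  rw [sum_div]
  apply sum_congr rfl
  intro k _
  rw [cast_choose (2 * n) k]
  have hk : ((k : ℝ) + 1) ≠ 0 := by positivity
  have hn : ((2 * n : ℕ) : ℝ) + 1 ≠ 0 := by positivity
  push_cast
  field_simp

lemma Bsum (n : ℕ) :
    ∑ k ∈ range (2 * n + 1), (-2 : ℝ) ^ k * ((2 * n).choose k : ℝ) * H k / ((k : ℝ) + 1)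
      = Vf (2 * n + 1) / (2 * (n : ℝ) + 1) := by
  unfold Vf
  rw [sum_div]
  apply sum_congr rfl
  intro k _
  rw [cast_choose (2 * n) k]
  have hk : ((k : ℝ) + 1) ≠ 0 := by positivity
  push_cast
  field_simp

end Stmt8Aux

/-- The identity obtained by applying `d/dℓ` at `ℓ = 1/2` to the parametric
generalization of the Reed Dawson identity. -/
theorem stmt_8 (n : ℕ) :
    -4 * ∑ k ∈ Finset.range (2 * n + 1),
        (-2 : ℝ) ^ k * ((2 * n).choose k : ℝ) / ((k : ℝ) + 1) ^ 2
      - 2 * ∑ k ∈ Finset.range (2 * n + 1),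
        (-2 : ℝ) ^ k * ((2 * n).choose k : ℝ) * H k / ((k : ℝ) + 1)
    = 2 * (H (n + 1) - 2 * H (2 * n + 2)) / (2 * (n : ℝ) + 1) := by
  rw [Stmt8Aux.Asum, Stmt8Aux.Bsum, Stmt8Aux.Vf_odd, Stmt8Aux.Uf_odd, Stmt8Aux.Hsum]
  have h : (2 * (n : ℝ) + 1) ≠ 0 := by positivity
  field_simp
  ring
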